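/- For any A ≠ 0 and B a positive integer, if the function U(ξ) = A·tanh^B(ξ) satisfies −ν·U + (1/3)·p·a·U³ − q·ν·a²·U'' = 0 for all ξ in some open interval with p·a·ν·q ≠ 0, then B = 1. -/

import Mathlib

open Real Polynomial

lemma aux_one_sub_tanh_sq (x : ℝ) : 1 - Real.tanh x ^ 2 = 1 / Real.cosh x ^ 2 := by
  have hc := Real.cosh_pos x
  rw [Real.tanh_eq_sinh_div_cosh]
  field_simp
  exact Real.cosh_sq_sub_sinh_sq x

lemma aux_tanh_hasDerivAt (x : ℝ) :
    HasDerivAt Real.tanh (1 - Real.tanh x ^ 2) x := by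
  have hc := (Real.cosh_pos x).ne'
  have h := (Real.hasDerivAt_sinh x).div (Real.hasDerivAt_cosh x) hc
  have hfun : Real.tanh = fun y => Real.sinh y / Real.cosh y :=
    funext fun y => Real.tanh_eq_sinh_div_cosh y
  rw [hfun]
  refine (h.congr_deriv ?_).congr_of_eventuallyEq (Filter.Eventually.of_forall fun _ => rfl); symm
  rw [← hfun, aux_one_sub_tanh_sq]
  have h1 := Real.cosh_sq_sub_sinh_sq x
  field_simp
  nlinarith [h1]

lemma aux_pow_tanh_hasDerivAt (k : ℕ) (hk : 1 ≤ k) (x : ℝ) :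
    HasDerivAt (fun s => Real.tanh s ^ k)
      ((k : ℝ) * (Real.tanh x ^ (k - 1) - Real.tanh x ^ (k + 1))) x := by
  have h := (aux_tanh_hasDerivAt x).pow k
  refine h.congr_deriv ?_; symm
  have hpow : Real.tanh x ^ (k - 1) * Real.tanh x ^ 2 = Real.tanh x ^ (k + 1) := by
    rw [← pow_add]; congr 1; omega
  ring_nf
  linear_combination (k : ℝ) * hpow

theorem fmEW_balancing (A a p q ν : ℝ) (B : ℕ) (hA : A ≠ 0) (hB : 0 < B)
    (hcoef : p * a * ν * q ≠ 0) (c d : ℝ) (hcd : c < d)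
    (hode : ∀ ξ ∈ Set.Ioo c d,
      -ν * (A * Real.tanh ξ ^ B) + (1/3) * p * a * (A * Real.tanh ξ ^ B)^3
        - q * ν * a^2 * iteratedDeriv 2 (fun s => A * Real.tanh s ^ B) ξ = 0) :
    B = 1 := by
  by_contra hne
  have hB2 : 2 ≤ B := by omega
  -- first derivative
  have hd1 : ∀ x, HasDerivAt (fun s => A * Real.tanh s ^ B)
      (A * ((B : ℝ) * (Real.tanh x ^ (B - 1) - Real.tanh x ^ (B + 1)))) x :=
    fun x => (aux_pow_tanh_hasDerivAt B (by omega) x).const_mul A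
  have hderiv1 : deriv (fun s => A * Real.tanh s ^ B)
      = fun x => A * ((B : ℝ) * (Real.tanh x ^ (B - 1) - Real.tanh x ^ (B + 1))) :=
    funext fun x => (hd1 x).deriv
  have hd2 : ∀ x, HasDerivAt
      (fun s => A * ((B : ℝ) * (Real.tanh s ^ (B - 1) - Real.tanh s ^ (B + 1))))
      (A * ((B : ℝ) * (((B - 1 : ℕ) : ℝ) * (Real.tanh x ^ (B - 2) - Real.tanh x ^ B)
        - ((B + 1 : ℕ) : ℝ) * (Real.tanh x ^ B - Real.tanh x ^ (B + 2))))) x := by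
    intro x
    have h1 := aux_pow_tanh_hasDerivAt (B - 1) (by omega) x
    have h2 := aux_pow_tanh_hasDerivAt (B + 1) (by omega) x
    rw [show B - 1 - 1 = B - 2 from by omega, show B - 1 + 1 = B from by omega] at h1
    rw [show B + 1 - 1 = B from by omega] at h2
    exact ((h1.sub h2).const_mul (B : ℝ)).const_mul A
  have hit2 : ∀ x, iteratedDeriv 2 (fun s => A * Real.tanh s ^ B) x
      = A * ((B : ℝ) * (((B - 1 : ℕ) : ℝ) * (Real.tanh x ^ (B - 2) - Real.tanh x ^ B)
        - ((B + 1 : ℕ) : ℝ) * (Real.tanh x ^ B - Real.tanh x ^ (B + 2)))) := by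
    intro x
    rw [show (2 : ℕ) = 1 + 1 from rfl, iteratedDeriv_succ, iteratedDeriv_one, hderiv1]
    exact (hd2 x).deriv
  -- the polynomial
  set P : ℝ[X] := C (-ν) * (C A * X ^ B) + C ((1/3) * p * a) * (C A * X ^ B) ^ 3
    - C (q * ν * a ^ 2) * (C A * (C (B : ℝ) *
        (C ((B - 1 : ℕ) : ℝ) * (X ^ (B - 2) - X ^ B)
          - C ((B + 1 : ℕ) : ℝ) * (X ^ B - X ^ (B + 2))))) with hP
  have htanh_cont : Continuous Real.tanh := by
    have : Real.tanh = fun y => Real.sinh y / Real.cosh y :=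
      funext fun y => Real.tanh_eq_sinh_div_cosh y
    rw [this]
    exact Real.continuous_sinh.div Real.continuous_cosh fun x => (Real.cosh_pos x).ne'
  have htanh_mono : StrictMono Real.tanh := by
    apply strictMono_of_deriv_pos
    intro x
    rw [(aux_tanh_hasDerivAt x).deriv, aux_one_sub_tanh_sq]
    positivity
  have hroot : ∀ y ∈ Set.Ioo (Real.tanh c) (Real.tanh d), P.IsRoot y := by
    intro y hy
    obtain ⟨ξ, hξ, rfl⟩ := intermediate_value_Ioo hcd.le htanh_cont.continuousOn hy
    have h0 := hode ξ hξ
    rw [hit2 ξ] at h0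
    simp only [hP, IsRoot, eval_add, eval_sub, eval_mul, eval_pow, eval_C, eval_X]
    linear_combination h0
  have hPz : P = 0 := by
    apply P.eq_zero_of_infinite_isRoot
    exact (Set.Ioo_infinite (htanh_mono hcd)).mono hroot
  have hc3 := congrArg (fun Q : ℝ[X] => Q.coeff (3 * B)) hPz
  simp only [hP, coeff_add, coeff_sub, coeff_zero, mul_pow, ← C_pow, ← pow_mul,
    coeff_C_mul, coeff_X_pow, coeff_sub] at hc3
  rw [if_neg (by omega : ¬ 3 * B = B), if_pos (by ring : 3 * B = B * 3),
    if_neg (by omega : ¬ 3 * B = B - 2), if_neg (by omega : ¬ 3 * B = B + 2)] at hc3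
  have hA3 : A ^ 3 ≠ 0 := pow_ne_zero 3 hA
  have hpa : p * a ≠ 0 := fun h => hcoef (by rw [mul_assoc] at *; simp [h])
  apply hpa
  have : (1/3) * p * a * A ^ 3 = 0 := by linarith [hc3]
  have h3 : (1/3 : ℝ) ≠ 0 := by norm_num
  field_simp at this
  exact (mul_eq_zero.mp (by linarith [this] : p * a * A ^ 3 = 0)).resolve_right hA3
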